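/- Let A be an expanding 2×2 matrix with characteristic polynomial x² + 2x + 3 and v with {v, Av} linearly independent, and set 𝒟 = {0, v, kAv} with |k| ≥ 3. Then the self-affine set T(A,𝒟) is disconnected. -/

import Mathlib

set_option maxHeartbeats 1600000

open Matrix Polynomial

/-- Coefficient sequence: `(A⁻¹)^n v = (cseq n).1 • v + (cseq n).2 • (A v)`. -/
noncomputable def cseq : ℕ → ℝ × ℝ
  | 0 => (1, 0)
  | n+1 => ((cseq n).2 - 2/3 * (cseq n).1, -(1/3) * (cseq n).1)

lemma cseq_succ (n : ℕ) :
    cseq (n+1) = ((cseq n).2 - 2/3 * (cseq n).1, -(1/3) * (cseq n).1) := rfl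

lemma cseq_Q (n : ℕ) :
    (cseq n).1 ^ 2 - 2 * (cseq n).1 * (cseq n).2 + 3 * (cseq n).2 ^ 2 = (1/3 : ℝ) ^ n := by
  induction n with
  | zero => simp [cseq]
  | succ n ih => rw [cseq_succ]; linear_combination (1/3 : ℝ) * ih

lemma cseq_bound (n : ℕ) : |(cseq n).2| ≤ 0.72 * 0.58 ^ n := by
  have hQ := cseq_Q n
  have e : ((0.72 : ℝ) * 0.58 ^ n) ^ 2 = 0.5184 * 0.3364 ^ n := by
    rw [mul_pow, ← pow_mul, mul_comm n 2, pow_mul]; norm_num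
  have hp : ((1:ℝ)/3) ^ n ≤ (0.3364 : ℝ) ^ n :=
    pow_le_pow_left₀ (by norm_num) (by norm_num) n
  have hpn : (0:ℝ) ≤ (0.3364 : ℝ) ^ n := by positivity
  have h2 : ((cseq n).2) ^ 2 ≤ (0.72 * 0.58 ^ n) ^ 2 := by
    rw [e]; nlinarith [sq_nonneg ((cseq n).1 - (cseq n).2)]
  calc |(cseq n).2| = Real.sqrt (((cseq n).2) ^ 2) := (Real.sqrt_sq_eq_abs _).symm
    _ ≤ Real.sqrt ((0.72 * 0.58 ^ n) ^ 2) := Real.sqrt_le_sqrt h2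
    _ = 0.72 * 0.58 ^ n := Real.sqrt_sq (by positivity)

lemma cseq_summable : Summable (fun n => |(cseq n).2|) := by
  apply Summable.of_nonneg_of_le (fun n => abs_nonneg _) cseq_bound
  exact (summable_geometric_of_lt_one (by norm_num) (by norm_num)).mul_left _

lemma cseq_tsum_le : ∑' n, |(cseq n).2| ≤ 0.729 := by
  rw [← cseq_summable.sum_add_tsum_nat_add 9]
  have c1 : cseq 1 = (-(2/3), -(1/3)) := by rw [cseq_succ]; norm_num [cseq]
  have c2 : cseq 2 = (1/9, 2/9) := by rw [cseq_succ, c1]; norm_num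
  have c3 : cseq 3 = (4/27, -(1/27)) := by rw [cseq_succ, c2]; norm_num
  have c4 : cseq 4 = (-(11/81), -(4/81)) := by rw [cseq_succ, c3]; norm_num
  have c5 : cseq 5 = (10/243, 11/243) := by rw [cseq_succ, c4]; norm_num
  have c6 : cseq 6 = (13/729, -(10/729)) := by rw [cseq_succ, c5]; norm_num
  have c7 : cseq 7 = (-(56/2187), -(13/2187)) := by rw [cseq_succ, c6]; norm_num
  have c8 : cseq 8 = (73/6561, 56/6561) := by rw [cseq_succ, c7]; norm_num
  have hhead : ∑ i ∈ Finset.range 9, |(cseq i).2| = 4694/6561 := by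
    rw [Finset.sum_range_succ, Finset.sum_range_succ, Finset.sum_range_succ,
      Finset.sum_range_succ, Finset.sum_range_succ, Finset.sum_range_succ,
      Finset.sum_range_succ, Finset.sum_range_succ, Finset.sum_range_one,
      show cseq 0 = (1,0) from rfl, c1, c2, c3, c4, c5, c6, c7, c8]
    simp only [Prod.snd]
    rw [abs_zero, abs_of_nonpos (by norm_num), abs_of_nonneg (by norm_num),
      abs_of_nonpos (by norm_num), abs_of_nonpos (by norm_num), abs_of_nonneg (by norm_num),
      abs_of_nonpos (by norm_num), abs_of_nonpos (by norm_num), abs_of_nonneg (by norm_num)]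
    norm_num
  have hg : Summable fun i : ℕ => (0.72 : ℝ) * 0.58 ^ 9 * 0.58 ^ i :=
    (summable_geometric_of_lt_one (by norm_num) (by norm_num)).mul_left _
  have htail : ∑' (i : ℕ), |(cseq (i + 9)).2| ≤ 0.72 * 0.58 ^ 9 * (1 - 0.58)⁻¹ := by
    have h1 : ∀ i : ℕ, |(cseq (i + 9)).2| ≤ 0.72 * 0.58 ^ 9 * 0.58 ^ i := by
      intro i
      calc |(cseq (i + 9)).2| ≤ 0.72 * 0.58 ^ (i + 9) := cseq_bound _
        _ = 0.72 * 0.58 ^ 9 * 0.58 ^ i := by ring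
    calc ∑' (i : ℕ), |(cseq (i + 9)).2|
        ≤ ∑' (i : ℕ), (0.72 : ℝ) * 0.58 ^ 9 * 0.58 ^ i :=
          Summable.tsum_le_tsum h1 ((summable_nat_add_iff 9).2 cseq_summable) hg
      _ = 0.72 * 0.58 ^ 9 * (1 - 0.58)⁻¹ := by
          rw [tsum_mul_left, tsum_geometric_of_lt_one (by norm_num) (by norm_num)]
  rw [hhead]
  nlinarith [htail]

lemma cseq_tsum_shift_le : ∑' n, |(cseq (n + 1)).2| ≤ 0.729 := by
  have h := cseq_summable.sum_add_tsum_nat_add 1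
  rw [Finset.sum_range_one, show (cseq 0).2 = 0 from rfl, abs_zero, zero_add] at h
  rw [h]; exact cseq_tsum_le

/-- All (complex) eigenvalues of `A` have modulus strictly larger than `1`. -/
def IsExpandingMat (A : Matrix (Fin 2) (Fin 2) ℝ) : Prop :=
  ∀ μ ∈ spectrum ℂ (A.map (algebraMap ℝ ℂ)), 1 < ‖μ‖

/-- The self-affine set `T(A, D) = {∑_{i≥1} A^{-i} d_i : d_i ∈ D}`. -/
noncomputable def selfAffine (A : Matrix (Fin 2) (Fin 2) ℝ) (D : Set (Fin 2 → ℝ)) :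
    Set (Fin 2 → ℝ) :=
  { x | ∃ d : ℕ → (Fin 2 → ℝ), (∀ n, d n ∈ D) ∧
      HasSum (fun n => (A⁻¹ ^ (n + 1)) *ᵥ d n) x }

theorem stmt13 (A : Matrix (Fin 2) (Fin 2) ℝ) (hexp : IsExpandingMat A)
    (hchar : A.charpoly = X ^ 2 + C (2 : ℝ) * X + C 3)
    (v : Fin 2 → ℝ) (hv : LinearIndependent ℝ ![v, A *ᵥ v])
    (k : ℤ) (hk : 3 ≤ |k|)
    (D : Set (Fin 2 → ℝ)) (hD : D = {0, v, (k : ℝ) • (A *ᵥ v)}) :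
    ¬ IsConnected (selfAffine A D) := by
  rintro ⟨hne, hpre⟩
  -- Cayley–Hamilton and the inverse of `A`
  have hCH := Matrix.aeval_self_charpoly A
  rw [hchar] at hCH
  simp only [map_add, _root_.map_mul, map_pow, aeval_X, aeval_C,
    Algebra.algebraMap_eq_smul_one, smul_one_mul] at hCH
  have hAA : A ^ 2 = (-2 : ℝ) • A - (3 : ℝ) • 1 := by
    linear_combination (norm := module) hCH
  have hBA : A * ((-(1/3) : ℝ) • A - ((2/3) : ℝ) • 1) = 1 := by
    rw [mul_sub, mul_smul_comm, mul_smul_comm, mul_one, ← pow_two, hAA]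
    module
  have hAinv : A⁻¹ = (-(1/3) : ℝ) • A - ((2/3) : ℝ) • 1 := Matrix.inv_eq_right_inv hBA
  have hAAi : A * A⁻¹ = 1 := by rw [hAinv]; exact hBA
  have hAiA : A⁻¹ * A = 1 := mul_eq_one_comm.mp hAAi
  have hAivv : A⁻¹ *ᵥ v = (-(2/3) : ℝ) • v + (-(1/3) : ℝ) • (A *ᵥ v) := by
    rw [hAinv, Matrix.sub_mulVec, Matrix.smul_mulVec, Matrix.smul_mulVec,
      Matrix.one_mulVec]
    module
  have hAivAv : A⁻¹ *ᵥ (A *ᵥ v) = v := by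
    rw [Matrix.mulVec_mulVec, hAiA, Matrix.one_mulVec]
  have hpow : ∀ n, (A⁻¹ ^ n) *ᵥ v = (cseq n).1 • v + (cseq n).2 • (A *ᵥ v) := by
    intro n
    induction n with
    | zero => simp [cseq]
    | succ n ih =>
        rw [pow_succ', ← Matrix.mulVec_mulVec, ih, Matrix.mulVec_add, Matrix.mulVec_smul,
          Matrix.mulVec_smul, hAivv, hAivAv, cseq_succ]
        module
  have hpowAv : ∀ n : ℕ, (A⁻¹ ^ (n+1)) *ᵥ (A *ᵥ v) = (cseq n).1 • v + (cseq n).2 • (A *ᵥ v) := by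
    intro n
    rw [Matrix.mulVec_mulVec, pow_succ, mul_assoc, hAiA, mul_one, hpow]
  -- the coordinate functional
  have hcard : Fintype.card (Fin 2) = Module.finrank ℝ (Fin 2 → ℝ) := by simp
  set b : Module.Basis (Fin 2) ℝ (Fin 2 → ℝ) := basisOfLinearIndependentOfCardEqFinrank hv hcard
    with hbdef
  have hb : ⇑b = ![v, A *ᵥ v] := coe_basisOfLinearIndependentOfCardEqFinrank hv hcard
  set φ : (Fin 2 → ℝ) →ₗ[ℝ] ℝ := b.coord 1 with hφdef
  have hφv : φ v = 0 := by
    have h0 : b 0 = v := by rw [hb]; rfl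
    rw [← h0, hφdef, Module.Basis.coord_apply, Module.Basis.repr_self]
    simp
  have hφAv : φ (A *ᵥ v) = 1 := by
    have h1 : b 1 = A *ᵥ v := by rw [hb]; rfl
    rw [← h1, hφdef, Module.Basis.coord_apply, Module.Basis.repr_self]
    simp
  set K : ℝ := (k : ℝ) with hKdef
  have hK3 : (3 : ℝ) ≤ |K| := by
    rw [hKdef, ← Int.cast_abs]
    exact_mod_cast hk
  set M : ℝ := (1 + |K|) * 0.729 with hMdef
  have hMK : M < |K| := by rw [hMdef]; nlinarith
  have hM0 : 0 ≤ M := by rw [hMdef]; positivity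
  clear_value K M
  -- membership of basic points
  have h0T : (0 : Fin 2 → ℝ) ∈ selfAffine A D := by
    refine ⟨fun _ => 0, fun n => by rw [hD]; exact Set.mem_insert _ _, ?_⟩
    simpa [Matrix.mulVec_zero] using hasSum_zero
  have hkvT : K • v ∈ selfAffine A D := by
    refine ⟨fun n => if n = 0 then K • (A *ᵥ v) else 0, ?_, ?_⟩
    · intro n
      by_cases h : n = 0
      · simp [h, hD]
      · simp [h, hD]
    · have he : (fun n : ℕ => (A⁻¹ ^ (n + 1)) *ᵥ (if n = 0 then K • (A *ᵥ v) else 0))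
          = fun n : ℕ => if n = 0 then K • v else 0 := by
        funext n
        by_cases h : n = 0
        · subst h
          simp only [if_true, zero_add, pow_one, Matrix.mulVec_smul, hAivAv]
        · simp [h, Matrix.mulVec_zero]
      rw [he]
      exact hasSum_ite_eq 0 (K • v)
  -- the values of φ on the summands
  have hval : ∀ w ∈ D, ∀ n : ℕ, φ ((A⁻¹ ^ (n+1)) *ᵥ w) = 0 ∨
      φ ((A⁻¹ ^ (n+1)) *ᵥ w) = (cseq (n+1)).2 ∨
      φ ((A⁻¹ ^ (n+1)) *ᵥ w) = K * (cseq n).2 := by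
    intro w hw n
    rw [hD] at hw
    rcases hw with rfl | rfl | rfl
    · left; rw [Matrix.mulVec_zero, map_zero]
    · right; left
      rw [hpow (n+1), map_add, _root_.map_smul, _root_.map_smul, hφv, hφAv]
      simp
    · right; right
      rw [Matrix.mulVec_smul, _root_.map_smul, hpowAv n, map_add, _root_.map_smul,
        _root_.map_smul, hφv, hφAv]
      simp
  -- the diameter estimate
  have hdiam : ∀ x ∈ selfAffine A D, ∀ y ∈ selfAffine A D, |φ x - φ y| ≤ M := by
    rintro x ⟨d, hd, hsx⟩ y ⟨e, he, hsy⟩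
    set Φ : (Fin 2 → ℝ) →L[ℝ] ℝ := LinearMap.toContinuousLinearMap φ with hΦdef
    have hΦ : ∀ u, Φ u = φ u := fun u => rfl
    have hsx' : HasSum (fun n => φ ((A⁻¹ ^ (n+1)) *ᵥ d n)) (φ x) := by
      have := Φ.hasSum hsx
      simpa [hΦ] using this
    have hsy' : HasSum (fun n => φ ((A⁻¹ ^ (n+1)) *ᵥ e n)) (φ y) := by
      have := Φ.hasSum hsy
      simpa [hΦ] using this
    have hF := hsx'.sub hsy'
    set g : ℕ → ℝ := fun n => |(cseq (n+1)).2| + |K| * |(cseq n).2| with hgdef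
    have hFg : ∀ n, |φ ((A⁻¹ ^ (n+1)) *ᵥ d n) - φ ((A⁻¹ ^ (n+1)) *ᵥ e n)| ≤ g n := by
      intro n
      have t0 : (0:ℝ) ≤ |K| * |(cseq n).2| := by positivity
      have t0' : (0:ℝ) ≤ |(cseq (n+1)).2| := abs_nonneg _
      have hg0 : (0:ℝ) ≤ g n := by simp only [hgdef]; linarith
      have t1 : |(cseq (n+1)).2| ≤ g n := by simp only [hgdef]; linarith
      have t2 : |K * (cseq n).2| ≤ g n := by
        simp only [hgdef, abs_mul]; linarith
      have t3 : |(cseq (n+1)).2 - K * (cseq n).2| ≤ g n := by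
        refine (abs_sub _ _).trans ?_
        simp only [hgdef, abs_mul]
        exact le_rfl
      rcases hval (d n) (hd n) n with h1 | h1 | h1 <;>
        rcases hval (e n) (he n) n with h2 | h2 | h2 <;>
        rw [h1, h2] <;>
        (try simp only [sub_zero, zero_sub, abs_neg, sub_self, abs_zero]) <;>
        first
          | exact hg0
          | exact t1
          | exact t2
          | exact t3
          | (rw [abs_sub_comm]; exact t3)
    have hgsum : Summable g := by
      rw [hgdef]
      exact ((summable_nat_add_iff 1).2 cseq_summable).add (cseq_summable.mul_left _)
    have hFsum : Summable (fun n => |φ ((A⁻¹ ^ (n+1)) *ᵥ d n) - φ ((A⁻¹ ^ (n+1)) *ᵥ e n)|) :=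
      Summable.of_nonneg_of_le (fun n => abs_nonneg _) hFg hgsum
    have hFsum' : Summable (fun n => ‖φ ((A⁻¹ ^ (n+1)) *ᵥ d n) - φ ((A⁻¹ ^ (n+1)) *ᵥ e n)‖) := by
      simpa only [Real.norm_eq_abs] using hFsum
    have habs : |φ x - φ y| ≤ ∑' n, |φ ((A⁻¹ ^ (n+1)) *ᵥ d n) - φ ((A⁻¹ ^ (n+1)) *ᵥ e n)| := by
      rw [← hF.tsum_eq]
      simpa only [Real.norm_eq_abs] using norm_tsum_le_tsum_norm hFsum'
    have hsum_le : ∑' n, |φ ((A⁻¹ ^ (n+1)) *ᵥ d n) - φ ((A⁻¹ ^ (n+1)) *ᵥ e n)| ≤ ∑' n, g n :=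
      Summable.tsum_le_tsum hFg hFsum hgsum
    have hgsum_le : ∑' n, g n ≤ M := by
      rw [hgdef]
      rw [Summable.tsum_add ((summable_nat_add_iff 1).2 cseq_summable) (cseq_summable.mul_left _),
        tsum_mul_left, hMdef]
      have h1 : ∑' n, |(cseq (n+1)).2| ≤ 0.729 := cseq_tsum_shift_le
      have h2 : |K| * ∑' n, |(cseq n).2| ≤ |K| * 0.729 :=
        mul_le_mul_of_nonneg_left cseq_tsum_le (abs_nonneg K)
      nlinarith
    linarith
  -- shift: every point of T is (A⁻¹ applied to) a point of T plus a digit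
  have hshift : ∀ x ∈ selfAffine A D, ∃ y ∈ selfAffine A D, ∃ w ∈ D, A *ᵥ x = y + w := by
    rintro x ⟨d, hd, hs⟩
    have h1 : HasSum (fun n => (A⁻¹ ^ (n + 1 + 1)) *ᵥ d (n + 1)) (x - A⁻¹ *ᵥ d 0) := by
      refine (hasSum_nat_add_iff (f := fun n => (A⁻¹ ^ (n + 1)) *ᵥ d n) 1).mpr ?_
      have he : x - A⁻¹ *ᵥ d 0 + ∑ i ∈ Finset.range 1, (A⁻¹ ^ (i + 1)) *ᵥ d i = x := by
        rw [Finset.sum_range_one, pow_one]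
        abel
      rw [he]
      exact hs
    set ΨA : (Fin 2 → ℝ) →L[ℝ] (Fin 2 → ℝ) :=
      LinearMap.toContinuousLinearMap (Matrix.mulVecLin A) with hΨdef
    have hΨ : ∀ u, ΨA u = A *ᵥ u := fun u => rfl
    have h2 := ΨA.hasSum h1
    have hterm : (fun n => ΨA ((A⁻¹ ^ (n + 1 + 1)) *ᵥ d (n + 1)))
        = fun n => (A⁻¹ ^ (n + 1)) *ᵥ d (n + 1) := by
      funext n
      rw [hΨ, Matrix.mulVec_mulVec, pow_succ', ← mul_assoc, hAAi, one_mul]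
    have hpt : ΨA (x - A⁻¹ *ᵥ d 0) = A *ᵥ x - d 0 := by
      rw [hΨ, Matrix.mulVec_sub, Matrix.mulVec_mulVec, hAAi, Matrix.one_mulVec]
    rw [hterm, hpt] at h2
    exact ⟨A *ᵥ x - d 0, ⟨fun n => d (n + 1), fun n => hd (n + 1), h2⟩, d 0, hd 0,
      (sub_add_cancel _ _).symm⟩
  -- values of φ on digits
  have hφD : ∀ w ∈ D, φ w = 0 ∨ φ w = K := by
    intro w hw
    rw [hD] at hw
    rcases hw with rfl | rfl | rfl
    · left; exact map_zero φ
    · left; exact hφv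
    · right; rw [_root_.map_smul, hφAv, smul_eq_mul, mul_one]
  -- split of φ(A x) for x in T
  set S : Set ℝ := φ '' selfAffine A D with hSdef
  have h0S : (0:ℝ) ∈ S := ⟨0, h0T, map_zero φ⟩
  have hdiamS : ∀ a ∈ S, ∀ b ∈ S, |a - b| ≤ M := by
    rintro a ⟨x, hx, rfl⟩ b ⟨y, hy, rfl⟩
    exact hdiam x hx y hy
  have hsplit : ∀ x ∈ selfAffine A D,
      (∃ a ∈ S, φ (A *ᵥ x) = a) ∨ (∃ a ∈ S, φ (A *ᵥ x) = a + K) := by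
    intro x hx
    obtain ⟨y, hy, w, hw, hxy⟩ := hshift x hx
    rcases hφD w hw with h | h
    · left; exact ⟨φ y, ⟨y, hy, rfl⟩, by rw [hxy, map_add, h, add_zero]⟩
    · right; exact ⟨φ y, ⟨y, hy, rfl⟩, by rw [hxy, map_add, h]⟩
  have hkv_val : φ (A *ᵥ (K • v)) = K := by
    rw [Matrix.mulVec_smul, _root_.map_smul, hφAv, smul_eq_mul, mul_one]
  -- bounded above/below
  have hSne : S.Nonempty := ⟨0, h0S⟩
  have hSbddA : BddAbove S := by
    refine ⟨M, fun a ha => ?_⟩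
    have := hdiamS a ha 0 h0S
    rw [sub_zero] at this
    exact (abs_le.mp this).2
  have hSbddB : BddBelow S := by
    refine ⟨-M, fun a ha => ?_⟩
    have := hdiamS a ha 0 h0S
    rw [sub_zero] at this
    exact (abs_le.mp this).1
  -- the continuous separating functional
  set Ψ : (Fin 2 → ℝ) →L[ℝ] ℝ :=
    LinearMap.toContinuousLinearMap (φ.comp (Matrix.mulVecLin A)) with hΨdef2
  have hΨax : ∀ u, Ψ u = φ (A *ᵥ u) := fun u => rfl
  have hK0 : k ≠ 0 := by
    intro h; rw [h] at hk; norm_num at hk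
  rcases lt_or_gt_of_ne hK0 with hkneg | hkpos
  · -- k < 0 : shifted copy lies below
    have hKneg : K < 0 := by rw [hKdef]; exact_mod_cast hkneg
    have hKabs : |K| = -K := abs_of_neg hKneg
    set i : ℝ := sInf S with hidef
    have hi_le : ∀ a ∈ S, i ≤ a := fun a ha => csInf_le hSbddB ha
    have hi_ge : ∀ a ∈ S, a - M ≤ i := by
      intro a ha
      apply le_csInf hSne
      intro b hb
      have := hdiamS a ha b hb
      have := (abs_le.mp this).2
      linarith
    set t : ℝ := i + (K + M)/2 with htdef
    clear_value i t
    have hKM : K + M < 0 := by rw [hKabs] at hMK; linarith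
    set U : Set (Fin 2 → ℝ) := Ψ ⁻¹' (Set.Ioi t) with hUdef
    set V : Set (Fin 2 → ℝ) := Ψ ⁻¹' (Set.Iio t) with hVdef
    have hUo : IsOpen U := isOpen_Ioi.preimage Ψ.continuous
    have hVo : IsOpen V := isOpen_Iio.preimage Ψ.continuous
    have hsub : selfAffine A D ⊆ U ∪ V := by
      intro x hx
      rcases hsplit x hx with ⟨a, haS, hax⟩ | ⟨a, haS, hax⟩
      · left
        have := hi_le a haS
        simp only [hUdef, Set.mem_preimage, Set.mem_Ioi, hΨax, hax]
        linarith
      · right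
        have := hi_ge a haS
        simp only [hVdef, Set.mem_preimage, Set.mem_Iio, hΨax, hax]
        have hiM : i ≤ 0 := hi_le 0 h0S
        have h0i : -M ≤ i := by have := hi_ge 0 h0S; linarith
        linarith
    have hTU : (selfAffine A D ∩ U).Nonempty := by
      refine ⟨0, h0T, ?_⟩
      simp only [hUdef, Set.mem_preimage, Set.mem_Ioi, hΨax, Matrix.mulVec_zero, map_zero]
      have hi0 : i ≤ 0 := hi_le 0 h0S
      linarith
    have hTV : (selfAffine A D ∩ V).Nonempty := by
      refine ⟨K • v, hkvT, ?_⟩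
      simp only [hVdef, Set.mem_preimage, Set.mem_Iio, hΨax, hkv_val]
      have h0i : -M ≤ i := by have := hi_ge 0 h0S; linarith
      linarith
    obtain ⟨z, hzT, hzU, hzV⟩ := hpre U V hUo hVo hsub hTU hTV
    simp only [hUdef, hVdef, Set.mem_preimage, Set.mem_Ioi, Set.mem_Iio] at hzU hzV
    linarith
  · -- k > 0 : shifted copy lies above
    have hKpos : 0 < K := by rw [hKdef]; exact_mod_cast hkpos
    have hKabs : |K| = K := abs_of_pos hKpos
    set s : ℝ := sSup S with hsdef
    have hs_le : ∀ a ∈ S, a ≤ s := fun a ha => le_csSup hSbddA ha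
    have hs_ge : ∀ a ∈ S, s ≤ a + M := by
      intro a ha
      apply csSup_le hSne
      intro b hb
      have := hdiamS b hb a ha
      have := (abs_le.mp this).2
      linarith
    set t : ℝ := s + (K - M)/2 with htdef
    clear_value s t
    have hKM : 0 < K - M := by rw [hKabs] at hMK; linarith
    set U : Set (Fin 2 → ℝ) := Ψ ⁻¹' (Set.Iio t) with hUdef
    set V : Set (Fin 2 → ℝ) := Ψ ⁻¹' (Set.Ioi t) with hVdef
    have hUo : IsOpen U := isOpen_Iio.preimage Ψ.continuous
    have hVo : IsOpen V := isOpen_Ioi.preimage Ψ.continuous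
    have hsub : selfAffine A D ⊆ U ∪ V := by
      intro x hx
      rcases hsplit x hx with ⟨a, haS, hax⟩ | ⟨a, haS, hax⟩
      · left
        have := hs_le a haS
        simp only [hUdef, Set.mem_preimage, Set.mem_Iio, hΨax, hax]
        linarith
      · right
        have := hs_ge a haS
        simp only [hVdef, Set.mem_preimage, Set.mem_Ioi, hΨax, hax]
        linarith
    have hTU : (selfAffine A D ∩ U).Nonempty := by
      refine ⟨0, h0T, ?_⟩
      simp only [hUdef, Set.mem_preimage, Set.mem_Iio, hΨax, Matrix.mulVec_zero, map_zero]
      have hs0 : 0 ≤ s := hs_le 0 h0S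
      linarith
    have hTV : (selfAffine A D ∩ V).Nonempty := by
      refine ⟨K • v, hkvT, ?_⟩
      simp only [hVdef, Set.mem_preimage, Set.mem_Ioi, hΨax, hkv_val]
      have hsM : s ≤ M := by have := hs_ge 0 h0S; linarith
      linarith
    obtain ⟨z, hzT, hzU, hzV⟩ := hpre U V hUo hVo hsub hTU hTV
    simp only [hUdef, hVdef, Set.mem_preimage, Set.mem_Iio, Set.mem_Ioi] at hzU hzV
    linarith
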